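/- Let a, b, c, d be four distinct points in the plane in general position. Then exactly one of the following holds: (i) the four points are in convex position, or (ii) exactly one of the four points lies in the interior of the triangle formed by the other three. -/

import Mathlib

noncomputable def triBasis {p q r : ℝ × ℝ} (h : ¬ Collinear ℝ ({p, q, r} : Set (ℝ × ℝ))) :
    AffineBasis (Fin 3) ℝ (ℝ × ℝ) := by
  have hind : AffineIndependent ℝ ![p, q, r] := affineIndependent_iff_not_collinear_set.2 h
  refine ⟨![p, q, r], hind, ?_⟩
  rw [hind.affineSpan_eq_top_iff_card_eq_finrank_add_one]
  simp

@[simp] lemma triBasis_apply {p q r : ℝ × ℝ} (h : ¬ Collinear ℝ ({p, q, r} : Set (ℝ × ℝ))) :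
    (triBasis h : Fin 3 → ℝ × ℝ) = ![p, q, r] := rfl

lemma triBasis_range {p q r : ℝ × ℝ} (h : ¬ Collinear ℝ ({p, q, r} : Set (ℝ × ℝ))) :
    Set.range (triBasis h : Fin 3 → ℝ × ℝ) = {p, q, r} := by
  rw [triBasis_apply]
  simp [Matrix.range_cons, Matrix.range_empty]
  ext x; simp; tauto

lemma coord_comb (e : AffineBasis (Fin 3) ℝ (ℝ × ℝ)) (w : Fin 3 → ℝ) (hw : w 0 + w 1 + w 2 = 1)
    (x : ℝ × ℝ) (hx : x = w 0 • e 0 + w 1 • e 1 + w 2 • e 2) (i : Fin 3) :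
    e.coord i x = w i := by
  have hw' : Finset.univ.sum w = 1 := by simp [Fin.sum_univ_three, hw]
  have : x = Finset.univ.affineCombination ℝ (e : Fin 3 → ℝ × ℝ) w := by
    rw [Finset.affineCombination_eq_linear_combination _ _ _ hw']
    simp [Fin.sum_univ_three, hx]
  rw [this, e.coord_apply_combination_of_mem (Finset.mem_univ i) hw']

lemma comb_coord (e : AffineBasis (Fin 3) ℝ (ℝ × ℝ)) (x : ℝ × ℝ) :
    x = e.coord 0 x • e 0 + e.coord 1 x • e 1 + e.coord 2 x • e 2 := by
  have := e.linear_combination_coord_eq_self x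
  rw [Fin.sum_univ_three] at this
  exact this.symm

lemma sum_coord (e : AffineBasis (Fin 3) ℝ (ℝ × ℝ)) (x : ℝ × ℝ) :
    e.coord 0 x + e.coord 1 x + e.coord 2 x = 1 := by
  have := e.sum_coord_apply_eq_one x
  rwa [Fin.sum_univ_three] at this

lemma not_mem_hull (e : AffineBasis (Fin 3) ℝ (ℝ × ℝ)) {x : ℝ × ℝ} {i : Fin 3}
    (h : e.coord i x < 0) : x ∉ convexHull ℝ (Set.range (e : Fin 3 → ℝ × ℝ)) := by
  intro hx
  have hconv : Convex ℝ {y : ℝ × ℝ | 0 ≤ e.coord i y} :=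
    (convex_Ici (0:ℝ)).affine_preimage (e.coord i)
  have hsub : Set.range (e : Fin 3 → ℝ × ℝ) ⊆ {y | 0 ≤ e.coord i y} := by
    rintro _ ⟨j, rfl⟩
    by_cases hij : i = j <;> simp [AffineBasis.coord_apply, hij]
  have := convexHull_min hsub hconv hx
  simp at this; linarith

lemma mem_interior_hull (e : AffineBasis (Fin 3) ℝ (ℝ × ℝ)) {x : ℝ × ℝ}
    (h : ∀ i, 0 < e.coord i x) : x ∈ interior (convexHull ℝ (Set.range (e : Fin 3 → ℝ × ℝ))) := by
  rw [e.interior_convexHull]; exact h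

lemma collinear_of_comb {x p q : ℝ × ℝ} (w1 w2 : ℝ) (hsum : w1 + w2 = 1)
    (hx : x = w1 • p + w2 • q) : Collinear ℝ ({x, p, q} : Set (ℝ × ℝ)) := by
  apply collinear_insert_of_mem_affineSpan_pair (k := ℝ)
  have : x = AffineMap.lineMap p q w2 := by
    rw [AffineMap.lineMap_apply_module, hx]
    have : w1 = 1 - w2 := by linarith
    rw [this]
  rw [this]
  exact AffineMap.lineMap_mem_affineSpan_pair _ _ _

lemma not_mem_hull_triple {p q r x : ℝ × ℝ} (h : ¬ Collinear ℝ ({p, q, r} : Set (ℝ × ℝ)))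
    (w : Fin 3 → ℝ) (hsum : w 0 + w 1 + w 2 = 1)
    (hx : x = w 0 • p + w 1 • q + w 2 • r) (i : Fin 3) (hneg : w i < 0) :
    x ∉ convexHull ℝ ({p, q, r} : Set (ℝ × ℝ)) := by
  rw [← triBasis_range h]
  have hc := coord_comb (triBasis h) w hsum x hx i
  exact not_mem_hull (triBasis h) (by rw [hc]; exact hneg)

lemma mem_interior_triple {p q r x : ℝ × ℝ} (h : ¬ Collinear ℝ ({p, q, r} : Set (ℝ × ℝ)))
    (w : Fin 3 → ℝ) (hsum : w 0 + w 1 + w 2 = 1)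
    (hx : x = w 0 • p + w 1 • q + w 2 • r) (hpos : ∀ i, 0 < w i) :
    x ∈ interior (convexHull ℝ ({p, q, r} : Set (ℝ × ℝ))) := by
  rw [← triBasis_range h]
  exact mem_interior_hull (triBasis h) (fun i => by
    rw [coord_comb (triBasis h) w hsum x hx i]; exact hpos i)

lemma vert_not_interior {p q r x : ℝ × ℝ} (h : ¬ Collinear ℝ ({p, q, r} : Set (ℝ × ℝ)))
    (hx : x ∈ ({p, q, r} : Set (ℝ × ℝ))) :
    x ∉ interior (convexHull ℝ ({p, q, r} : Set (ℝ × ℝ))) := by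
  rw [← triBasis_range h, (triBasis h).interior_convexHull]
  intro hmem
  rcases hx with rfl | rfl | rfl
  · have := hmem 1
    have h0 : (triBasis h).coord 1 ((triBasis h) 0) = 0 := by
      rw [AffineBasis.coord_apply, if_neg (by decide)]
    simp only [show ((triBasis h) 0) = x from rfl] at h0
    rw [h0] at this; linarith
  · have := hmem 0
    have h0 : (triBasis h).coord 0 ((triBasis h) 1) = 0 := by
      rw [AffineBasis.coord_apply, if_neg (by decide)]
    simp only [show ((triBasis h) 1) = x from rfl] at h0
    rw [h0] at this; linarith
  · have := hmem 0
    have h0 : (triBasis h).coord 0 ((triBasis h) 2) = 0 := by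
      rw [AffineBasis.coord_apply, if_neg (by decide)]
    simp only [show ((triBasis h) 2) = x from rfl] at h0
    rw [h0] at this; linarith



def GenPos (S : Set (ℝ × ℝ)) : Prop :=
  ∀ a ∈ S, ∀ b ∈ S, ∀ c ∈ S, a ≠ b → a ≠ c → b ≠ c →
    ¬ Collinear ℝ ({a, b, c} : Set (ℝ × ℝ))

def ConvexPos (S : Set (ℝ × ℝ)) : Prop :=
  ∀ p ∈ S, p ∉ convexHull ℝ (S \ {p})

noncomputable def det2 (a b c : ℝ × ℝ) : ℝ :=
  (b.1 - a.1) * (c.2 - a.2) - (b.2 - a.2) * (c.1 - a.1)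

noncomputable def chi (a b c : ℝ × ℝ) : ℝ := Real.sign (det2 a b c)

theorem stmt_19 (a b c d : ℝ × ℝ)
    (hdist : List.Pairwise (· ≠ ·) [a, b, c, d])
    (hgp : GenPos {a, b, c, d}) :
    Xor' (ConvexPos {a, b, c, d})
      (∃! p : ℝ × ℝ, p ∈ ({a, b, c, d} : Set (ℝ × ℝ)) ∧
        p ∈ interior (convexHull ℝ (({a, b, c, d} : Set (ℝ × ℝ)) \ {p}))) := by
  simp only [List.pairwise_cons, List.mem_cons, List.not_mem_nil] at hdist
  obtain ⟨h1, h2, h3, -⟩ := hdist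
  have hab : a ≠ b := h1 b (by tauto)
  have hac : a ≠ c := h1 c (by tauto)
  have had : a ≠ d := h1 d (by tauto)
  have hbc : b ≠ c := h2 c (by tauto)
  have hbd : b ≠ d := h2 d (by tauto)
  have hcd : c ≠ d := h3 d (by tauto)
  set S : Set (ℝ × ℝ) := {a, b, c, d} with hS
  have hmema : a ∈ S := by simp [hS]
  have hmemb : b ∈ S := by simp [hS]
  have hmemc : c ∈ S := by simp [hS]
  have hmemd : d ∈ S := by simp [hS]
  have habc : ¬ Collinear ℝ ({a, b, c} : Set (ℝ × ℝ)) := hgp a hmema b hmemb c hmemc hab hac hbc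
  have hbcd : ¬ Collinear ℝ ({b, c, d} : Set (ℝ × ℝ)) := hgp b hmemb c hmemc d hmemd hbc hbd hcd
  have hacd : ¬ Collinear ℝ ({a, c, d} : Set (ℝ × ℝ)) := hgp a hmema c hmemc d hmemd hac had hcd
  have habd : ¬ Collinear ℝ ({a, b, d} : Set (ℝ × ℝ)) := hgp a hmema b hmemb d hmemd hab had hbd
  have hSa : S \ {a} = {b, c, d} := by
    ext x
    simp only [hS, Set.mem_diff, Set.mem_insert_iff, Set.mem_singleton_iff]
    constructor
    · rintro ⟨(rfl | rfl | rfl | rfl), h⟩ <;> simp_all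
    · rintro (rfl | rfl | rfl) <;> simp_all [Ne.symm]
  have hSb : S \ {b} = {a, c, d} := by
    ext x
    simp only [hS, Set.mem_diff, Set.mem_insert_iff, Set.mem_singleton_iff]
    constructor
    · rintro ⟨(rfl | rfl | rfl | rfl), h⟩ <;> simp_all
    · rintro (rfl | rfl | rfl) <;> simp_all [Ne.symm]
  have hSc : S \ {c} = {a, b, d} := by
    ext x
    simp only [hS, Set.mem_diff, Set.mem_insert_iff, Set.mem_singleton_iff]
    constructor
    · rintro ⟨(rfl | rfl | rfl | rfl), h⟩ <;> simp_all
    · rintro (rfl | rfl | rfl) <;> simp_all [Ne.symm]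
  have hSd : S \ {d} = {a, b, c} := by
    ext x
    simp only [hS, Set.mem_diff, Set.mem_insert_iff, Set.mem_singleton_iff]
    constructor
    · rintro ⟨(rfl | rfl | rfl | rfl), h⟩ <;> simp_all
    · rintro (rfl | rfl | rfl) <;> simp_all [Ne.symm]
  -- barycentric coordinates of d with respect to a b c
  set e : AffineBasis (Fin 3) ℝ (ℝ × ℝ) := triBasis habc with he
  set α : ℝ := e.coord 0 d with hα
  set β : ℝ := e.coord 1 d with hβ
  set γ : ℝ := e.coord 2 d with hγ
  have hsum : α + β + γ = 1 := sum_coord e d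
  have hd : d = α • a + β • b + γ • c := by
    have := comb_coord e d
    simpa [he] using this
  have hα0 : α ≠ 0 := by
    intro h0
    refine hgp d hmemd b hmemb c hmemc (Ne.symm hbd) (Ne.symm hcd) hbc ?_
    exact collinear_of_comb β γ (by linarith) (by rw [hd, h0]; module)
  have hβ0 : β ≠ 0 := by
    intro h0
    refine hgp d hmemd a hmema c hmemc (Ne.symm had) (Ne.symm hcd) hac ?_
    exact collinear_of_comb α γ (by linarith) (by rw [hd, h0]; module)
  have hγ0 : γ ≠ 0 := by
    intro h0
    refine hgp d hmemd a hmema b hmemb (Ne.symm had) (Ne.symm hbd) hab ?_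
    exact collinear_of_comb α β (by linarith) (by rw [hd, h0]; module)
  have hcomba : a = (-β/α) • b + (-γ/α) • c + (1/α) • d := by
    rw [hd]; match_scalars <;> field_simp <;> ring
  have hcombb : b = (-α/β) • a + (-γ/β) • c + (1/β) • d := by
    rw [hd]; match_scalars <;> field_simp <;> ring
  have hcombc : c = (-α/γ) • a + (-β/γ) • b + (1/γ) • d := by
    rw [hd]; match_scalars <;> field_simp <;> ring
  have hsuma : (-β/α) + (-γ/α) + (1/α) = 1 := by
    rw [← add_div, ← add_div, div_eq_one_iff_eq hα0]; linarith
  have hsumb : (-α/β) + (-γ/β) + (1/β) = 1 := by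
    rw [← add_div, ← add_div, div_eq_one_iff_eq hβ0]; linarith
  have hsumc : (-α/γ) + (-β/γ) + (1/γ) = 1 := by
    rw [← add_div, ← add_div, div_eq_one_iff_eq hγ0]; linarith
  -- dichotomy
  have main : ConvexPos S ∨ ∃ p ∈ S, p ∈ interior (convexHull ℝ (S \ {p})) := by
    rcases hα0.lt_or_gt with hA | hA <;> rcases hβ0.lt_or_gt with hB | hB <;>
      rcases hγ0.lt_or_gt with hC | hC
    · linarith
    · -- α<0 β<0 γ>0 : c interior of a b d
      right
      refine ⟨c, hmemc, ?_⟩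
      rw [hSc]
      refine mem_interior_triple habd ![-α/γ, -β/γ, 1/γ] hsumc hcombc ?_
      intro i
      fin_cases i
      · show (0:ℝ) < -α/γ
        exact div_pos (by linarith) hC
      · show (0:ℝ) < -β/γ
        exact div_pos (by linarith) hC
      · show (0:ℝ) < 1/γ
        exact div_pos one_pos hC
    · -- α<0 β>0 γ<0 : b interior of a c d
      right
      refine ⟨b, hmemb, ?_⟩
      rw [hSb]
      refine mem_interior_triple hacd ![-α/β, -γ/β, 1/β] hsumb hcombb ?_
      intro i
      fin_cases i
      · show (0:ℝ) < -α/β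
        exact div_pos (by linarith) hB
      · show (0:ℝ) < -γ/β
        exact div_pos (by linarith) hB
      · show (0:ℝ) < 1/β
        exact div_pos one_pos hB
    · -- α<0 β>0 γ>0 : convex position
      left
      intro p hp
      simp only [hS, Set.mem_insert_iff, Set.mem_singleton_iff] at hp
      rcases hp with rfl | rfl | rfl | rfl
      · rw [hSa]
        exact not_mem_hull_triple hbcd ![-β/α, -γ/α, 1/α] hsuma hcomba 2
          (show (1:ℝ)/α < 0 from div_neg_of_pos_of_neg one_pos hA)
      · rw [hSb]
        exact not_mem_hull_triple hacd ![-α/β, -γ/β, 1/β] hsumb hcombb 1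
          (show -γ/β < 0 from div_neg_of_neg_of_pos (by linarith) hB)
      · rw [hSc]
        exact not_mem_hull_triple habd ![-α/γ, -β/γ, 1/γ] hsumc hcombc 1
          (show -β/γ < 0 from div_neg_of_neg_of_pos (by linarith) hC)
      · rw [hSd]
        exact not_mem_hull_triple habc ![α, β, γ] (by simpa using hsum) (by simpa using hd) 0 hA
    · -- α>0 β<0 γ<0 : a interior of b c d
      right
      refine ⟨a, hmema, ?_⟩
      rw [hSa]
      refine mem_interior_triple hbcd ![-β/α, -γ/α, 1/α] hsuma hcomba ?_
      intro i
      fin_cases i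
      · show (0:ℝ) < -β/α
        exact div_pos (by linarith) hA
      · show (0:ℝ) < -γ/α
        exact div_pos (by linarith) hA
      · show (0:ℝ) < 1/α
        exact div_pos one_pos hA
    · -- α>0 β<0 γ>0 : convex position
      left
      intro p hp
      simp only [hS, Set.mem_insert_iff, Set.mem_singleton_iff] at hp
      rcases hp with rfl | rfl | rfl | rfl
      · rw [hSa]
        exact not_mem_hull_triple hbcd ![-β/α, -γ/α, 1/α] hsuma hcomba 1
          (show -γ/α < 0 from div_neg_of_neg_of_pos (by linarith) hA)
      · rw [hSb]
        exact not_mem_hull_triple hacd ![-α/β, -γ/β, 1/β] hsumb hcombb 2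
          (show (1:ℝ)/β < 0 from div_neg_of_pos_of_neg one_pos hB)
      · rw [hSc]
        exact not_mem_hull_triple habd ![-α/γ, -β/γ, 1/γ] hsumc hcombc 0
          (show -α/γ < 0 from div_neg_of_neg_of_pos (by linarith) hC)
      · rw [hSd]
        exact not_mem_hull_triple habc ![α, β, γ] (by simpa using hsum) (by simpa using hd) 1 hB
    · -- α>0 β>0 γ<0 : convex position
      left
      intro p hp
      simp only [hS, Set.mem_insert_iff, Set.mem_singleton_iff] at hp
      rcases hp with rfl | rfl | rfl | rfl
      · rw [hSa]
        exact not_mem_hull_triple hbcd ![-β/α, -γ/α, 1/α] hsuma hcomba 0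
          (show -β/α < 0 from div_neg_of_neg_of_pos (by linarith) hA)
      · rw [hSb]
        exact not_mem_hull_triple hacd ![-α/β, -γ/β, 1/β] hsumb hcombb 0
          (show -α/β < 0 from div_neg_of_neg_of_pos (by linarith) hB)
      · rw [hSc]
        exact not_mem_hull_triple habd ![-α/γ, -β/γ, 1/γ] hsumc hcombc 2
          (show (1:ℝ)/γ < 0 from div_neg_of_pos_of_neg one_pos hC)
      · rw [hSd]
        exact not_mem_hull_triple habc ![α, β, γ] (by simpa using hsum) (by simpa using hd) 2 hC
    · -- all positive : d interior of a b c
      right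
      refine ⟨d, hmemd, ?_⟩
      rw [hSd]
      refine mem_interior_triple habc ![α, β, γ] (by simpa using hsum) (by simpa using hd) ?_
      intro i
      fin_cases i
      · show (0:ℝ) < α; exact hA
      · show (0:ℝ) < β; exact hB
      · show (0:ℝ) < γ; exact hC
  -- at most one interior point
  have uniq : ∀ p ∈ S, ∀ q ∈ S, p ∈ interior (convexHull ℝ (S \ {p})) →
      q ∈ interior (convexHull ℝ (S \ {q})) → q = p := by
    intro p hp q hq hpI hqI
    by_contra hne
    have hsub : convexHull ℝ (S \ {q}) ⊆ convexHull ℝ (S \ {p}) := by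
      apply convexHull_min _ (convex_convexHull ℝ _)
      intro x hx
      by_cases hxp : x = p
      · subst hxp; exact interior_subset hpI
      · exact subset_convexHull ℝ _ ⟨hx.1, hxp⟩
    have hq2 : q ∈ interior (convexHull ℝ (S \ {p})) := interior_mono hsub hqI
    have hqSp : q ∈ S \ {p} := ⟨hq, hne⟩
    simp only [hS, Set.mem_insert_iff, Set.mem_singleton_iff] at hp
    rcases hp with rfl | rfl | rfl | rfl
    · rw [hSa] at hq2 hqSp; exact vert_not_interior hbcd hqSp hq2
    · rw [hSb] at hq2 hqSp; exact vert_not_interior hacd hqSp hq2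
    · rw [hSc] at hq2 hqSp; exact vert_not_interior habd hqSp hq2
    · rw [hSd] at hq2 hqSp; exact vert_not_interior habc hqSp hq2
  have notboth : ∀ p ∈ S, p ∈ interior (convexHull ℝ (S \ {p})) → ¬ ConvexPos S :=
    fun p hp hint hcp => hcp p hp (interior_subset hint)
  rcases main with hA | ⟨p, hp, hint⟩
  · left
    refine ⟨hA, ?_⟩
    rintro ⟨p, ⟨hp, hpI⟩, -⟩
    exact notboth p hp hpI hA
  · right
    exact ⟨⟨p, ⟨hp, hint⟩, fun q ⟨hq, hqI⟩ => uniq p hp q hq hint hqI⟩,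
      fun hA => notboth p hp hint hA⟩
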